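/- If a matrix A ∈ SL(2,ℤ) fixes some point τ of the upper half plane ℍ (i.e. A•τ = τ), then A has finite order in SL(2,ℤ). -/

import Mathlib

open Matrix MatrixGroups

/-- Cayley–Hamilton for 2×2 integer matrices of determinant 1. -/
lemma sl2_cayley_hamilton (M : Matrix (Fin 2) (Fin 2) ℤ) (h : M.det = 1) :
    M * M + 1 = M.trace • M := by
  rw [Matrix.eta_fin_two M] at h ⊢
  rw [Matrix.det_fin_two_of] at h
  ext i j
  fin_cases i <;> fin_cases j <;>
    simp [Matrix.mul_apply, Fin.sum_univ_two, Matrix.trace_fin_two_of, Matrix.one_apply] <;>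
    linarith

/-- A 2×2 integer matrix of determinant 1 with trace in {-1,0,1} satisfies M^12 = 1. -/
lemma pow12_of_trace_sq_le_one (M : Matrix (Fin 2) (Fin 2) ℤ) (h : M.det = 1)
    (ht : M.trace ^ 2 ≤ 1) : M ^ 12 = 1 := by
  have hCH := sl2_cayley_hamilton M h
  have hb1 : -1 ≤ M.trace := by nlinarith
  have hb2 : M.trace ≤ 1 := by nlinarith
  set t := M.trace with htdef
  clear_value t
  interval_cases t
  · -- t = -1 : M ^ 3 = 1
    rw [show ((-1 : ℤ) • M) = -M by simp] at hCH
    have h2 : M ^ 2 = -M - 1 := by rw [sq]; exact eq_sub_of_add_eq hCH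
    have h3 : M ^ 3 = 1 := by
      rw [pow_succ, h2, sub_mul, neg_mul, ← sq, h2, one_mul]
      abel
    calc M ^ 12 = (M ^ 3) ^ 4 := by rw [← pow_mul]
    _ = 1 := by rw [h3, one_pow]
  · -- t = 0 : M ^ 2 = -1
    rw [zero_smul] at hCH
    have h2 : M ^ 2 = -1 := by rw [sq]; exact eq_neg_of_add_eq_zero_left hCH
    calc M ^ 12 = (M ^ 2) ^ 6 := by rw [← pow_mul]
    _ = ((-1 : Matrix (Fin 2) (Fin 2) ℤ)) ^ 6 := by rw [h2]
    _ = 1 := by norm_num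
  · -- t = 1 : M ^ 3 = -1
    rw [one_smul] at hCH
    have h2 : M ^ 2 = M - 1 := by rw [sq]; exact eq_sub_of_add_eq hCH
    have h3 : M ^ 3 = -1 := by
      rw [pow_succ, h2, sub_mul, one_mul, ← sq, h2]
      abel
    calc M ^ 12 = (M ^ 3) ^ 4 := by rw [← pow_mul]
    _ = ((-1 : Matrix (Fin 2) (Fin 2) ℤ)) ^ 4 := by rw [h3]
    _ = 1 := by norm_num

/-- If A ∈ SL(2,ℤ) fixes a point of the upper half plane, then A has finite order. -/
theorem fixed_point_finite_order (A : SL(2, ℤ)) (τ : UpperHalfPlane)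
    (hfix : A • τ = τ) : IsOfFinOrder A := by
  have hdet : (A 0 0) * (A 1 1) - (A 0 1) * (A 1 0) = 1 := by
    have := A.2; rwa [Matrix.det_fin_two] at this
  -- the fixed point equation in ℂ
  have hden : ((A 1 0 : ℂ) * τ + (A 1 1 : ℂ)) ≠ 0 := by
    intro h0
    have him := congrArg Complex.im h0
    simp [Complex.add_im, Complex.mul_im] at him
    rcases him with h | h
    · have hre := congrArg Complex.re h0
      simp [h, Complex.add_re, Complex.mul_re] at hre
      rw [h, hre] at hdet
      simp at hdet
    · exact absurd h (ne_of_gt τ.2)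
  have heq : ((A 0 0 : ℂ) * τ + (A 0 1 : ℂ)) = (τ : ℂ) * ((A 1 0 : ℂ) * τ + (A 1 1 : ℂ)) := by
    have h := congrArg (UpperHalfPlane.coe) hfix
    rw [UpperHalfPlane.specialLinearGroup_apply] at h
    simp only [UpperHalfPlane.coe_mk] at h
    simp only [algebraMap_int_eq, eq_intCast, Complex.ofReal_intCast] at h
    rw [div_eq_iff hden] at h
    linear_combination h
  -- real and imaginary parts
  set x : ℝ := (τ : ℂ).re with hx
  set y : ℝ := (τ : ℂ).im with hy
  have hy0 : 0 < y := τ.2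
  have him := congrArg Complex.im heq
  have hre := congrArg Complex.re heq
  simp only [Complex.add_im, Complex.add_re, Complex.mul_im, Complex.mul_re,
    Complex.intCast_im, Complex.intCast_re, ← hx, ← hy] at him hre
  have hdetR : ((A 0 0 : ℝ)) * (A 1 1) - (A 0 1) * (A 1 0) = 1 := by exact_mod_cast hdet
  have ha' : (A 0 0 : ℝ) = 2 * (A 1 0) * x + (A 1 1) := by
    have h' : ((A 0 0 : ℝ) - 2 * (A 1 0) * x - (A 1 1)) * y = 0 := by linear_combination him
    rcases mul_eq_zero.mp h' with h | h
    · linarith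
    · exact absurd h (ne_of_gt hy0)
  have hb' : (A 0 1 : ℝ) =
      (A 1 0) * x ^ 2 + (A 1 1) * x - (A 1 0) * y ^ 2 - (A 0 0) * x := by
    linear_combination hre
  have htr : ((A 0 0 : ℝ) + (A 1 1)) ^ 2 = 4 - 4 * (A 1 0 : ℝ) ^ 2 * y ^ 2 := by
    linear_combination ((A 0 0 : ℝ) - 2 * (A 1 0) * x - (A 1 1)) * ha' + 4 * (A 1 0) * hb' +
      4 * hdetR
  -- pass to A^12 = 1
  have key : (A : Matrix (Fin 2) (Fin 2) ℤ) ^ 12 = 1 := by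
    by_cases hc : A 1 0 = 0
    · -- then A = ±1
      have hc0 : ((A 1 0 : ℤ) : ℝ) = 0 := by rw [hc]; norm_num
      have ha : ((A 0 0 : ℝ)) = (A 1 1 : ℝ) := by rw [ha', hc0]; ring
      have had : A 0 0 = A 1 1 := by exact_mod_cast ha
      have hb : A 0 1 = 0 := by
        have : ((A 0 1 : ℝ)) = 0 := by rw [hb', hc0, ha]; ring
        exact_mod_cast this
      have ha2 : A 0 0 * A 0 0 = 1 := by rw [hc, hb] at hdet; rw [← had] at hdet; linarith
      have hM : (A : Matrix (Fin 2) (Fin 2) ℤ) = (A 0 0) • (1 : Matrix (Fin 2) (Fin 2) ℤ) := by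
        rw [Matrix.eta_fin_two (A : Matrix (Fin 2) (Fin 2) ℤ)]
        rw [hc, hb, ← had]
        ext i j
        fin_cases i <;> fin_cases j <;> simp [Matrix.one_apply]
      rw [hM, smul_pow, one_pow, show (12 : ℕ) = 2 * 6 by norm_num, pow_mul,
        show (A 0 0) ^ 2 = 1 by rw [sq]; exact ha2, one_pow, one_smul]
    · -- elliptic case: trace² ≤ 1
      apply pow12_of_trace_sq_le_one _ A.2
      rw [Matrix.trace_fin_two]
      have hcR : ((A 1 0 : ℝ)) ≠ 0 := Int.cast_ne_zero.mpr hc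
      have hlt : ((A 0 0 : ℝ) + (A 1 1)) ^ 2 < 4 := by
        rw [htr]
        have : 0 < 4 * (A 1 0 : ℝ) ^ 2 * y ^ 2 := by positivity
        linarith
      have hZ : (A 0 0 + A 1 1) ^ 2 < 4 := by exact_mod_cast hlt
      have h1 : A 0 0 + A 1 1 ≤ 1 := by nlinarith
      have h2 : -1 ≤ A 0 0 + A 1 1 := by nlinarith
      nlinarith [mul_nonneg (by linarith : (0:ℤ) ≤ 1 - (A 0 0 + A 1 1))
        (by linarith : (0:ℤ) ≤ (A 0 0 + A 1 1) + 1)]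
  -- conclude
  rw [isOfFinOrder_iff_pow_eq_one]
  refine ⟨12, by norm_num, ?_⟩
  apply Subtype.coe_injective
  simpa [Matrix.SpecialLinearGroup.coe_pow] using key
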